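/- Let (Y, A, X) be a recollement of abelian categories with A AB3. Suppose Λ is a small category such that A admits Λ-colimits, Y has exact Λ-colimits, and i^! : A → Y commutes with Λ-colimits. Then both torsion pairs (C, T) and (T, F) of the associated TTF triple are colim_Λ-exact. -/

import Mathlib

open CategoryTheory Limits

universe v u u₁ u₂ u₃

/-- A recollement of categories: adjoint triples `(i^*, i_*, i^!)` and `(j_!, j^*, j_*)`,
with `i_*`, `j_!`, `j_*` fully faithful and the essential image of `i_*` equal to the
kernel of `j^*`. -/
structure Recollement (Y : Type u₁) (A : Type u₂) (X : Type u₃)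
    [Category.{v} Y] [Category.{v} A] [Category.{v} X] where
  /-- `i_* : Y ⥤ A` -/
  iStar : Y ⥤ A
  /-- `i^* : A ⥤ Y` -/
  iUp : A ⥤ Y
  /-- `i^! : A ⥤ Y` -/
  iShriek : A ⥤ Y
  /-- `j^* : A ⥤ X` -/
  jUp : A ⥤ X
  /-- `j_! : X ⥤ A` -/
  jLower : X ⥤ A
  /-- `j_* : X ⥤ A` -/
  jRight : X ⥤ A
  adj_i₁ : iUp ⊣ iStar
  adj_i₂ : iStar ⊣ iShriek
  adj_j₁ : jLower ⊣ jUp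
  adj_j₂ : jUp ⊣ jRight
  iStar_full : iStar.Full
  iStar_faithful : iStar.Faithful
  jLower_full : jLower.Full
  jLower_faithful : jLower.Faithful
  jRight_full : jRight.Full
  jRight_faithful : jRight.Faithful
  essImage_iff : ∀ M : A, iStar.essImage M ↔ IsZero (jUp.obj M)

variable {Y : Type u₁} {A : Type u₂} {X : Type u₃}
  [Category.{v} Y] [Category.{v} A] [Category.{v} X]

/-- The class `C = Ker i^*` of the TTF triple associated to a recollement. -/
def Recollement.C (R : Recollement Y A X) : A → Prop := fun M => IsZero (R.iUp.obj M)

/-- The class `T = Im i_*` of the TTF triple associated to a recollement. -/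
def Recollement.T (R : Recollement Y A X) : A → Prop := fun M => R.iStar.essImage M

/-- The class `F = Ker i^!` of the TTF triple associated to a recollement. -/
def Recollement.F (R : Recollement Y A X) : A → Prop := fun M => IsZero (R.iShriek.obj M)

/-- An (additive) functor between abelian categories is exact if it preserves finite
limits and finite colimits. -/
def IsExactFunctor {C D : Type*} [Category C] [Category D] (G : C ⥤ D) : Prop :=
  Nonempty (PreservesFiniteLimits G) ∧ Nonempty (PreservesFiniteColimits G)

/-- An abelian category has exact `Λ`-colimits if `Λ`-colimits exist and the colimit
functor `(Λ ⥤ C) ⥤ C` is exact (being a left adjoint it is automatically right exact,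
so exactness amounts to preservation of finite limits). -/
structure HasExactColimitsOfShape' (Λ : Type v) [SmallCategory Λ]
    (C : Type u) [Category.{v} C] [Abelian C] : Prop where
  hasColimitsOfShape : HasColimitsOfShape Λ C
  exact' : letI := hasColimitsOfShape
    Nonempty (PreservesFiniteLimits (colim (J := Λ) (C := C)))

/-- An abelian category has exact `Λ`-limits if `Λ`-limits exist and the limit functor
`(Λ ⥤ C) ⥤ C` is exact (being a right adjoint it is automatically left exact, so
exactness amounts to preservation of finite colimits). -/
structure HasExactLimitsOfShape' (Λ : Type v) [SmallCategory Λ]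
    (C : Type u) [Category.{v} C] [Abelian C] : Prop where
  hasLimitsOfShape : HasLimitsOfShape Λ C
  exact' : letI := hasLimitsOfShape
    Nonempty (PreservesFiniteColimits (lim (J := Λ) (C := C)))

/-- A torsion pair `(V, W)` in an abelian category, together with its torsion radical `v`
(with natural monomorphism `η : v ⟶ 𝟭`) and torsion coradical `w`
(with natural epimorphism `π : 𝟭 ⟶ w`), such that `0 ⟶ v M ⟶ M ⟶ w M ⟶ 0` is
short exact for every `M`. -/
structure TorsionPairData (A : Type u) [Category.{v} A] [Abelian A] where
  V : A → Prop
  W : A → Prop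
  V_iso : ∀ {M N : A}, (M ≅ N) → V M → V N
  W_iso : ∀ {M N : A}, (M ≅ N) → W M → W N
  hom_zero : ∀ {M N : A}, V M → W N → ∀ f : M ⟶ N, f = 0
  v : A ⥤ A
  η : v ⟶ 𝟭 A
  w : A ⥤ A
  π : 𝟭 A ⟶ w
  v_mem : ∀ M : A, V (v.obj M)
  w_mem : ∀ M : A, W (w.obj M)
  η_mono : ∀ M : A, Mono (η.app M)
  π_epi : ∀ M : A, Epi (π.app M)
  comp_zero : ∀ M : A, η.app M ≫ π.app M = 0
  exact_mid : ∀ M : A, (ShortComplex.mk (η.app M) (π.app M) (comp_zero M)).Exact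

/-- A torsion pair is `colim_Λ`-exact if for every `Λ`-diagram `(X_λ)` the canonical map
`colim v(X_λ) ⟶ colim X_λ` induced by the torsion radical monomorphisms is a
monomorphism. -/
def TorsionPairData.ColimExact {A : Type u} [Category.{v} A] [Abelian A]
    (P : TorsionPairData A) (Λ : Type v) [SmallCategory Λ]
    [HasColimitsOfShape Λ A] : Prop :=
  ∀ D : Λ ⥤ A, Mono (colimMap (Functor.whiskerLeft D P.η ≫ D.rightUnitor.hom))

section AuxHelpers

variable {A' : Type*} {B' : Type*} [Category A'] [Category B']

/-- The point of a limit kernel fork of a monomorphism is zero. -/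
lemma aux_isZero_pt_of_isLimit_kernelFork [Abelian B'] {M N : B'} {f : M ⟶ N}
    (hf : Mono f) {c : KernelFork f} (hc : IsLimit c) : IsZero c.pt := by
  rw [IsZero.iff_id_eq_zero]
  have hι : Fork.ι c = 0 := by
    rw [← cancel_mono f, c.condition, zero_comp]
  apply Fork.IsLimit.hom_ext hc
  rw [hι, comp_zero, comp_zero]

/-- If `F` preserves the kernel of `S.g` and kills `S.X₃`, then `F.map S.f` is an
isomorphism whenever `S` is exact with `S.f` mono. -/
lemma aux_isIso_map_f [Abelian A'] [HasZeroMorphisms B'] (F : A' ⥤ B')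
    [F.PreservesZeroMorphisms] (S : ShortComplex A') [Mono S.f]
    [PreservesLimit (parallelPair S.g 0) F]
    (hS : S.Exact) (hW : IsZero (F.obj S.X₃)) (hm : Mono (F.map S.f)) :
    IsIso (F.map S.f) := by
  have hk : IsLimit (KernelFork.ofι S.f S.zero) := hS.fIsKernel
  have hk' := KernelFork.mapIsLimit _ hk F
  have hg0 : F.map S.g = 0 := hW.eq_of_tgt _ _
  obtain ⟨l, hl⟩ : {l : F.obj S.X₂ ⟶ F.obj S.X₁ //
      l ≫ Fork.ι ((KernelFork.ofι S.f S.zero).map F) = 𝟙 (F.obj S.X₂)} :=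
    Fork.IsLimit.lift' hk' (𝟙 (F.obj S.X₂))
    (by rw [hg0])
  have hι : Fork.ι ((KernelFork.ofι S.f S.zero).map F) = F.map S.f := rfl
  rw [hι] at hl
  refine ⟨l, ?_, hl⟩
  rw [← cancel_mono (F.map S.f), Category.assoc, hl, Category.comp_id, Category.id_comp]

/-- If `F` preserves `J`-colimits and `F.map (α.app j)` is an isomorphism for all `j`,
then `F.map (colimMap α)` is an isomorphism. -/
lemma aux_isIso_map_colimMap {J : Type*} [Category J] [HasColimitsOfShape J A']
    (F : A' ⥤ B') [PreservesColimitsOfShape J F]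
    {D₁ D₂ : J ⥤ A'} (α : D₁ ⟶ D₂) (h : ∀ j, IsIso (F.map (α.app j))) :
    IsIso (F.map (colimMap α)) := by
  have t₁ := isColimitOfPreserves F (colimit.isColimit D₁)
  have t₂ := isColimitOfPreserves F (colimit.isColimit D₂)
  haveI : ∀ j, IsIso ((Functor.whiskerRight α F).app j) := h
  haveI : IsIso (Functor.whiskerRight α F) := NatIso.isIso_of_isIso_app _
  have heq : F.map (colimMap α) =
      (IsColimit.coconePointsIsoOfNatIso t₁ t₂ (asIso (Functor.whiskerRight α F))).hom := by
    apply t₁.hom_ext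
    intro j
    rw [IsColimit.comp_coconePointsIsoOfNatIso_hom]
    dsimp
    rw [← F.map_comp, ι_colimMap, F.map_comp]
  rw [heq]
  infer_instance

/-- If `F` preserves `J`-colimits and kills every object of a diagram, it kills the
colimit of the diagram. -/
lemma aux_isZero_obj_colimit {J : Type*} [Category J] [HasColimitsOfShape J A']
    [HasZeroMorphisms B'] (F : A' ⥤ B') [PreservesColimitsOfShape J F]
    (D : J ⥤ A') (h : ∀ j, IsZero (F.obj (D.obj j))) : IsZero (F.obj (colimit D)) := by
  have t := isColimitOfPreserves F (colimit.isColimit D)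
  rw [IsZero.iff_id_eq_zero]
  apply t.hom_ext
  intro j
  exact (h j).eq_of_src _ _

/-- If `F` preserves `J`-colimits, `J`-colimits in the target are exact, and
`F.map (α.app j)` is mono for all `j`, then `F.map (colimMap α)` is mono. -/
lemma aux_mono_map_colimMap {J : Type*} [Category J] [HasColimitsOfShape J A']
    [Abelian B'] [HasColimitsOfShape J B']
    (F : A' ⥤ B') [PreservesColimitsOfShape J F]
    [PreservesFiniteLimits (colim (J := J) (C := B'))]
    {D₁ D₂ : J ⥤ A'} (α : D₁ ⟶ D₂) (h : ∀ j, Mono (F.map (α.app j))) :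
    Mono (F.map (colimMap α)) := by
  haveI : ∀ j, Mono ((Functor.whiskerRight α F).app j) := h
  haveI : Mono (Functor.whiskerRight α F) := NatTrans.mono_of_mono_app _
  have hmid : Mono (colimMap (Functor.whiskerRight α F)) := by
    have : colimMap (Functor.whiskerRight α F) = (colim (J := J) (C := B')).map (Functor.whiskerRight α F) :=
      rfl
    rw [this]
    exact (colim (J := J) (C := B')).map_mono _
  have heq : F.map (colimMap α) ≫ (preservesColimitIso F D₂).hom =
      (preservesColimitIso F D₁).hom ≫ colimMap (Functor.whiskerRight α F) := by
    apply (isColimitOfPreserves F (colimit.isColimit D₁)).hom_ext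
    intro j
    dsimp
    rw [← Category.assoc, ← F.map_comp, ι_colimMap, F.map_comp, Category.assoc,
      ι_preservesColimitIso_hom, ← Category.assoc, ι_preservesColimitIso_hom,
      ι_colimMap, Functor.whiskerRight_app]
  haveI : Mono (F.map (colimMap α) ≫ (preservesColimitIso F D₂).hom) := by
    rw [heq]; exact mono_comp _ _
  exact mono_of_mono _ (preservesColimitIso F D₂).hom

end AuxHelpers

/-- `i_*` sends zero objects to zero objects. -/
lemma Recollement.isZero_iStar_obj [Abelian Y] [Abelian A] [Abelian X]
    (R : Recollement Y A X) {Z : Y} (hZ : IsZero Z) : IsZero (R.iStar.obj Z) := by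
  rw [IsZero.iff_id_eq_zero]
  apply (R.adj_i₂.homEquiv Z (R.iStar.obj Z)).injective
  exact hZ.eq_of_src _ _

/-- A morphism in the middle category of a recollement is mono as soon as its images
under `i^!` and `j^*` are mono. -/
lemma Recollement.mono_of_maps [Abelian Y] [Abelian A] [Abelian X]
    (R : Recollement Y A X) {M N : A} (f : M ⟶ N)
    (hif : Mono (R.iShriek.map f)) (hjf : Mono (R.jUp.map f)) : Mono f := by
  letI : PreservesLimitsOfSize.{0, 0} R.iShriek := R.adj_i₂.rightAdjoint_preservesLimits
  letI : PreservesLimitsOfSize.{0, 0} R.jUp := R.adj_j₁.rightAdjoint_preservesLimits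
  letI : R.iShriek.IsRightAdjoint := R.adj_i₂.isRightAdjoint
  letI : R.jUp.IsRightAdjoint := R.adj_j₁.isRightAdjoint
  letI : R.iStar.Full := R.iStar_full
  letI : R.iStar.Faithful := R.iStar_faithful
  set c : KernelFork f := KernelFork.ofι (kernel.ι f) (kernel.condition f) with hc_def
  have hc : IsLimit c := kernelIsKernel f
  have hjK : IsZero (R.jUp.obj (kernel f)) :=
    aux_isZero_pt_of_isLimit_kernelFork hjf (KernelFork.mapIsLimit c hc R.jUp)
  have hiK : IsZero (R.iShriek.obj (kernel f)) :=
    aux_isZero_pt_of_isLimit_kernelFork hif (KernelFork.mapIsLimit c hc R.iShriek)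
  have hT : R.iStar.essImage (kernel f) := (R.essImage_iff _).mpr hjK
  obtain ⟨yK, ⟨e⟩⟩ := hT
  have hyK : IsZero yK := by
    have h1 : IsZero (R.iShriek.obj (R.iStar.obj yK)) := hiK.of_iso (R.iShriek.mapIso e)
    exact h1.of_iso (asIso (R.adj_i₂.unit.app yK))
  have hK : IsZero (kernel f) := (R.isZero_iStar_obj hyK).of_iso e.symm
  exact Preadditive.mono_of_isZero_kernel f hK

/-- Let `(Y, A, X)` be a recollement of abelian categories with `A` AB3 admitting
`Λ`-colimits, `Y` having exact `Λ`-colimits and `i^!` commuting with `Λ`-colimits. Then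
both torsion pairs `(C, T)` and `(T, F)` of the associated TTF triple are
`colim_Λ`-exact. -/
theorem recollement_colimExact_of_iShriek_preserves [Abelian Y] [Abelian A] [Abelian X]
    (R : Recollement Y A X) [HasCoproducts.{v} A]
    (Λ : Type v) [SmallCategory Λ] [HasColimitsOfShape Λ A]
    (hY : HasExactColimitsOfShape' Λ Y)
    (hi : Nonempty (PreservesColimitsOfShape Λ R.iShriek))
    (P₁ P₂ : TorsionPairData A)
    (hP₁V : P₁.V = R.C) (hP₁W : P₁.W = R.T) (hP₂V : P₂.V = R.T) (hP₂W : P₂.W = R.F) :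
    P₁.ColimExact Λ ∧ P₂.ColimExact Λ := by
  letI := hY.hasColimitsOfShape
  obtain ⟨hYexact⟩ := hY.exact'
  obtain ⟨hiP⟩ := hi
  letI : PreservesColimitsOfShape Λ R.iShriek := hiP
  letI : PreservesFiniteLimits (colim (J := Λ) (C := Y)) := hYexact
  letI : PreservesColimitsOfSize.{v, v} R.jUp := R.adj_j₂.leftAdjoint_preservesColimits
  letI : PreservesLimitsOfSize.{0, 0} R.iShriek := R.adj_i₂.rightAdjoint_preservesLimits
  letI : PreservesLimitsOfSize.{0, 0} R.jUp := R.adj_j₁.rightAdjoint_preservesLimits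
  letI : R.iShriek.IsRightAdjoint := R.adj_i₂.isRightAdjoint
  letI : R.jUp.IsRightAdjoint := R.adj_j₁.isRightAdjoint
  constructor
  · -- the torsion pair `(C, T)`
    intro D
    set α : D ⋙ P₁.v ⟶ D := Functor.whiskerLeft D P₁.η ≫ D.rightUnitor.hom with hα
    have happ : ∀ j : Λ, α.app j = P₁.η.app (D.obj j) := by
      intro j; simp [hα]
    -- pointwise, `j^*` inverts the torsion radical monomorphism
    have hjiso : ∀ M : A, IsIso (R.jUp.map (P₁.η.app M)) := by
      intro M
      haveI : Mono (P₁.η.app M) := P₁.η_mono M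
      refine aux_isIso_map_f R.jUp (ShortComplex.mk (P₁.η.app M) (P₁.π.app M)
        (P₁.comp_zero M)) (P₁.exact_mid M) ?_ (R.jUp.map_mono _)
      have hw := P₁.w_mem M
      rw [hP₁W] at hw
      exact (R.essImage_iff _).mp hw
    -- hence `j^*` of the colimit comparison map is an isomorphism, in particular mono
    have hj : Mono (R.jUp.map (colimMap α)) := by
      have : IsIso (R.jUp.map (colimMap α)) := by
        refine aux_isIso_map_colimMap R.jUp α ?_
        intro j; rw [happ j]; exact hjiso (D.obj j)
      exact IsIso.mono_of_iso _
    -- `i^!` of the colimit comparison map is mono since `Y` has exact `Λ`-colimits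
    have hi' : Mono (R.iShriek.map (colimMap α)) := by
      refine aux_mono_map_colimMap R.iShriek α ?_
      intro j
      rw [happ j]
      haveI : Mono (P₁.η.app (D.obj j)) := P₁.η_mono _
      exact R.iShriek.map_mono _
    exact R.mono_of_maps _ hi' hj
  · -- the torsion pair `(T, F)`
    intro D
    set α : D ⋙ P₂.v ⟶ D := Functor.whiskerLeft D P₂.η ≫ D.rightUnitor.hom with hα
    have happ : ∀ j : Λ, α.app j = P₂.η.app (D.obj j) := by
      intro j; simp [hα]
    -- pointwise, `i^!` inverts the torsion radical monomorphism
    have hiiso : ∀ M : A, IsIso (R.iShriek.map (P₂.η.app M)) := by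
      intro M
      haveI : Mono (P₂.η.app M) := P₂.η_mono M
      refine aux_isIso_map_f R.iShriek (ShortComplex.mk (P₂.η.app M) (P₂.π.app M)
        (P₂.comp_zero M)) (P₂.exact_mid M) ?_ (R.iShriek.map_mono _)
      have hw := P₂.w_mem M
      rw [hP₂W] at hw
      exact hw
    have hi' : Mono (R.iShriek.map (colimMap α)) := by
      have : IsIso (R.iShriek.map (colimMap α)) := by
        refine aux_isIso_map_colimMap R.iShriek α ?_
        intro j; rw [happ j]; exact hiiso (D.obj j)
      exact IsIso.mono_of_iso _
    -- `j^*` kills the colimit of the torsion parts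
    have hj : Mono (R.jUp.map (colimMap α)) := by
      have hz : IsZero (R.jUp.obj (colimit (D ⋙ P₂.v))) := by
        refine aux_isZero_obj_colimit R.jUp (D ⋙ P₂.v) ?_
        intro j
        have hv := P₂.v_mem (D.obj j)
        rw [hP₂V] at hv
        exact (R.essImage_iff _).mp hv
      exact mono_of_source_iso_zero _ hz.isoZero
    exact R.mono_of_maps _ hi' hj
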